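/- Let X be a Lindelöf T1 space such that every nonempty open subset of X has cardinality at least kc(X). Then X is productively Lindelöf if, and only if, X has the pL property. -/

import Mathlib

open Set TopologicalSpace

/-- `U` is an open covering of `X`. -/
def IsOpenCover {X : Type*} [TopologicalSpace X] (U : Set (Set X)) : Prop :=
  (∀ A ∈ U, IsOpen A) ∧ ⋃₀ U = Set.univ

/-- `𝒴` is a Lindelöf collection of open coverings: for every choice of a finite
subfamily of each member, countably many of these finite families are cofinal. -/
def IsLindelofCollection {X : Type*} [TopologicalSpace X] (𝒴 : Set (Set (Set X))) : Prop :=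
  ∀ f : Set (Set X) → Finset (Set X), (∀ U ∈ 𝒴, ↑(f U) ⊆ U) →
    ∃ g : ℕ → Set (Set X), (∀ n, g n ∈ 𝒴) ∧ ∀ U ∈ 𝒴, ∃ n, ↑(f (g n)) ⊆ U

/-- The pL property. -/
def HasPL (X : Type*) [TopologicalSpace X] : Prop :=
  ∀ 𝒴 : Set (Set (Set X)), (∀ U ∈ 𝒴, IsOpenCover U) → IsLindelofCollection 𝒴 →
    ∃ A : ℕ → Set X, (∀ n, IsOpen (A n)) ∧
      ∀ x : X, ∀ U ∈ 𝒴, ∃ n, x ∈ A n ∧ A n ∈ U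

/-- `X` is productively Lindelöf. -/
def ProductivelyLindelof (X : Type u) [TopologicalSpace X] : Prop :=
  ∀ (Y : Type u) (_ : TopologicalSpace Y), LindelofSpace Y → LindelofSpace (X × Y)

/-- `W` is a covering of `X × Y` by open boxes. -/
def IsBoxCover {X Y : Type*} [TopologicalSpace X] [TopologicalSpace Y]
    (W : Set (Set X × Set Y)) : Prop :=
  (∀ w ∈ W, IsOpen w.1 ∧ IsOpen w.2) ∧ ∀ p : X × Y, ∃ w ∈ W, p.1 ∈ w.1 ∧ p.2 ∈ w.2

/-- `W` is ω-injective: each first factor occurs with only countably many second factors. -/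
def IsOmegaInjective {X Y : Type*} (W : Set (Set X × Set Y)) : Prop :=
  ∀ A : Set X, {B : Set Y | (A, B) ∈ W}.Countable

/-- `W` is injective: equal first factors imply equal second factors. -/
def IsInjectiveCover {X Y : Type*} (W : Set (Set X × Set Y)) : Prop :=
  ∀ w ∈ W, ∀ w' ∈ W, w.1 = w'.1 → w.2 = w'.2

/-- The box family `W` refines the covering `W0` of `X × Y`. -/
def BoxRefines {X Y : Type*} (W : Set (Set X × Set Y)) (W0 : Set (Set (X × Y))) : Prop :=
  ∀ w ∈ W, ∃ V ∈ W0, w.1 ×ˢ w.2 ⊆ V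

/-- `kc X`: the minimal cardinality of a covering of `X` by compact subspaces. -/
noncomputable def kc (X : Type*) [TopologicalSpace X] : Cardinal :=
  sInf {c : Cardinal | ∃ S : Set (Set X),
    (∀ K ∈ S, IsCompact K) ∧ ⋃₀ S = Set.univ ∧ Cardinal.mk S = c}


universe u

open Cardinal in
lemma exists_puncture {X ι : Type u} (κ : Cardinal.{u}) (hι : #ι ≤ κ)
    (U : ι → Set X) (hU : ∀ i, κ ≤ #(U i)) :
    ∃ pt : ι → X, (∀ i, pt i ∈ U i) ∧ Function.Injective fun i => U i \ {pt i} := by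
  obtain ⟨e⟩ := (Cardinal.le_def ι κ.ord.ToType).mp (by rw [mk_ord_toType]; exact hι)
  set r : ι → ι → Prop := fun i j => e i < e j with hr
  have hwf : WellFounded r := InvImage.wf e (wellFounded_lt)
  have key : ∀ (i : ι) (g : ∀ j, r j i → X), ∃ x, x ∈ U i ∧
      ∀ (j) (h : r j i), U i \ {x} ≠ U j \ {g j h} := by
    intro i g
    set bad : Set X := ⋃ j : {j // r j i}, {x | x ∈ U i ∧ U i \ {x} = U j.1 \ {g j.1 j.2}}
      with hbad
    have hsub : ∀ j : {j // r j i},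
        {x | x ∈ U i ∧ U i \ {x} = U j.1 \ {g j.1 j.2}}.Subsingleton := by
      intro j x hx y hy
      by_contra hxy
      have : x ∈ U i \ {y} := ⟨hx.1, fun h => hxy h⟩
      rw [hy.2, ← hx.2] at this
      exact this.2 rfl
    have hcard : #bad < κ := by
      have h1 : #bad ≤ #{j // r j i} * ⨆ j : {j // r j i},
          #({x | x ∈ U i ∧ U i \ {x} = U j.1 \ {g j.1 j.2}}) := mk_iUnion_le _
      have h2 : (⨆ j : {j // r j i},
          #({x | x ∈ U i ∧ U i \ {x} = U j.1 \ {g j.1 j.2}})) ≤ 1 := by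
        rcases isEmpty_or_nonempty {j // r j i} with h | h
        · simp [ciSup_of_empty]
      
        · exact ciSup_le' fun j => mk_le_one_iff_set_subsingleton.mpr (hsub j)
      have h3 : #{j // r j i} ≤ #(Iio (e i)) := by
        refine mk_le_of_injective (f := fun j => (⟨e j.1, j.2⟩ : Iio (e i))) ?_
        intro a b hab
        exact Subtype.ext (e.injective (congrArg Subtype.val hab))
      have h4 : #(Iio (e i)) < κ := mk_Iio_ord_toType (e i)
      calc #bad ≤ #{j // r j i} * 1 := h1.trans (mul_le_mul' le_rfl h2)
        _ = #{j // r j i} := by rw [mul_one]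
        _ < κ := lt_of_le_of_lt h3 h4
    have : ¬ (U i ⊆ bad) := fun h => absurd ((hU i).trans (mk_le_mk_of_subset h)) hcard.not_ge
    obtain ⟨x, hxU, hxb⟩ := not_subset.mp this
    refine ⟨x, hxU, fun j h hEq => hxb ?_⟩
    exact mem_iUnion.mpr ⟨⟨j, h⟩, ⟨hxU, hEq⟩⟩
  set F : ∀ i, (∀ j, r j i → X) → X := fun i g => Classical.choose (key i g) with hF
  set pt : ι → X := hwf.fix F with hpt
  have hspec : ∀ i, pt i ∈ U i ∧ ∀ (j) (h : r j i), U i \ {pt i} ≠ U j \ {pt j} := by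
    intro i
    have heq : pt i = Classical.choose (key i (fun j _ => pt j)) := hwf.fix_eq F i
    rw [heq]
    exact Classical.choose_spec (key i (fun j _ => pt j))
  refine ⟨pt, fun i => (hspec i).1, fun i j hEq => ?_⟩
  by_contra hne
  have hij : e i ≠ e j := fun h => hne (e.injective h)
  rcases hij.lt_or_gt with h | h
  · exact (hspec j).2 i h hEq.symm
  · exact (hspec i).2 j h hEq

open Cardinal in
theorem prod_to_pL {X : Type u} [TopologicalSpace X] (hprod : ProductivelyLindelof X) :
    HasPL X := by
  classical
  intro 𝒴 hcov hlin
  set B : Set (Set ↥𝒴) :=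
    range (fun F : Finset (Set X) => {V : ↥𝒴 | ↑F ⊆ (V : Set (Set X))}) with hB
  letI τ : TopologicalSpace ↥𝒴 := generateFrom B
  have hbasic : ∀ O : Set ↥𝒴, IsOpen O → ∀ V ∈ O, ∃ F : Finset (Set X),
      (↑F ⊆ (V : Set (Set X))) ∧ {W : ↥𝒴 | ↑F ⊆ (W : Set (Set X))} ⊆ O := by
    intro O hO
    have hO' : GenerateOpen B O := hO
    clear hO
    induction hO' with
    | basic s hs =>
      obtain ⟨F, rfl⟩ := hs
      exact fun V hV => ⟨F, hV, subset_rfl⟩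
    | univ => exact fun V _ => ⟨∅, by simp, fun W _ => mem_univ W⟩
    | inter s t hs ht ihs iht =>
      intro V hV
      obtain ⟨Fs, hFs1, hFs2⟩ := ihs V hV.1
      obtain ⟨Ft, hFt1, hFt2⟩ := iht V hV.2
      refine ⟨Fs ∪ Ft, ?_, fun W hW => ⟨hFs2 ?_, hFt2 ?_⟩⟩
      · rw [Finset.coe_union]; exact union_subset hFs1 hFt1
      · exact fun A hA => hW (by simp [hA])
      · exact fun A hA => hW (by simp [hA])
    | sUnion S hS ih =>
      rintro V ⟨s, hsS, hVs⟩
      obtain ⟨F, hF1, hF2⟩ := ih s hsS V hVs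
      exact ⟨F, hF1, fun W hW => ⟨s, hsS, hF2 hW⟩⟩
  haveI hLY : LindelofSpace ↥𝒴 := by
    constructor
    apply isLindelof_of_countable_subcover
    intro ι c hc hcov'
    have h5 : ∀ V : ↥𝒴, ∃ F : Finset (Set X), ↑F ⊆ (V : Set (Set X)) ∧
        ∃ i, {W : ↥𝒴 | ↑F ⊆ (W : Set (Set X))} ⊆ c i := by
      intro V
      obtain ⟨i, hi⟩ := mem_iUnion.mp (hcov' (mem_univ V))
      obtain ⟨F, hF1, hF2⟩ := hbasic (c i) (hc i) V hi
      exact ⟨F, hF1, i, hF2⟩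
    choose Ff hFf1 hFf2 using h5
    choose idx hidx using hFf2
    set f : Set (Set X) → Finset (Set X) :=
      fun U => if h : U ∈ 𝒴 then Ff ⟨U, h⟩ else ∅ with hfdef
    have hf : ∀ U ∈ 𝒴, ↑(f U) ⊆ U := by
      intro U hU
      simp only [hfdef, dif_pos hU]
      exact hFf1 ⟨U, hU⟩
    obtain ⟨g, hg1, hg2⟩ := hlin f hf
    refine ⟨range (fun n => idx ⟨g n, hg1 n⟩), countable_range _, ?_⟩
    intro V _
    obtain ⟨n, hn⟩ := hg2 ↑V V.2
    refine mem_iUnion₂.mpr ⟨idx ⟨g n, hg1 n⟩, ⟨n, rfl⟩, hidx ⟨g n, hg1 n⟩ ?_⟩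
    show ↑(Ff ⟨g n, hg1 n⟩) ⊆ (V : Set (Set X))
    have : f (g n) = Ff ⟨g n, hg1 n⟩ := dif_pos (hg1 n)
    rwa [this] at hn
  haveI hXY : LindelofSpace (X × ↥𝒴) := hprod ↥𝒴 τ hLY
  set O : {u : Set X // IsOpen u} → Set (X × ↥𝒴) :=
    fun u => ↑u ×ˢ {V : ↥𝒴 | u.1 ∈ (V : Set (Set X))} with hO
  have hOopen : ∀ u, IsOpen (O u) := by
    intro u
    refine u.2.prod ?_
    have hmem : {V : ↥𝒴 | u.1 ∈ (V : Set (Set X))} ∈ B := by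
      refine ⟨{u.1}, ?_⟩
      ext W; simp
    exact isOpen_generateFrom_of_mem hmem
  have hOcov : (univ : Set (X × ↥𝒴)) ⊆ ⋃ u, O u := by
    rintro ⟨x, V⟩ -
    have hVc := hcov ↑V V.2
    have hx : x ∈ ⋃₀ (V : Set (Set X)) := hVc.2 ▸ mem_univ x
    obtain ⟨t, htV, hxt⟩ := hx
    exact mem_iUnion.2 ⟨⟨t, hVc.1 t htV⟩, ⟨hxt, htV⟩⟩
  obtain ⟨s, hsc, hscov⟩ :=
    (isLindelof_univ (X := X × ↥𝒴)).elim_countable_subcover O hOopen hOcov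
  rcases s.eq_empty_or_nonempty with rfl | hsne
  · refine ⟨fun _ => ∅, fun _ => isOpen_empty, fun x U hU => ?_⟩
    have := hscov (mem_univ (⟨x, ⟨U, hU⟩⟩ : X × ↥𝒴))
    simp at this
  · obtain ⟨e, he⟩ := hsc.exists_eq_range hsne
    refine ⟨fun n => (e n).1, fun n => (e n).2, fun x U hU => ?_⟩
    have hmem := hscov (mem_univ (⟨x, ⟨U, hU⟩⟩ : X × ↥𝒴))
    rw [he] at hmem
    obtain ⟨u, ⟨n, rfl⟩, hu⟩ := mem_iUnion₂.mp hmem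
    exact ⟨n, hu.1, hu.2⟩

open Cardinal in
theorem pL_to_prod {X : Type u} [TopologicalSpace X] [T1Space X] [LindelofSpace X]
    (hcard : ∀ U : Set X, IsOpen U → U.Nonempty → kc X ≤ Cardinal.mk U)
    (hpl : HasPL X) : ProductivelyLindelof X := by
  classical
  intro Y tY hY
  rcases isEmpty_or_nonempty X with hX | hX
  · haveI : IsEmpty (X × Y) := ⟨fun p => hX.false p.1⟩
    exact ⟨by rw [Set.univ_eq_empty_iff.mpr ‹_›]; exact isLindelof_empty⟩
  rcases isEmpty_or_nonempty Y with hYe | hYn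
  · haveI : IsEmpty (X × Y) := ⟨fun p => hYe.false p.2⟩
    exact ⟨by rw [Set.univ_eq_empty_iff.mpr ‹_›]; exact isLindelof_empty⟩
  constructor
  apply isLindelof_of_countable_subcover
  intro ι₀ c hc hccov
  -- a compact cover of minimal cardinality
  have hkc : ∃ S : Set (Set X), (∀ K ∈ S, IsCompact K) ∧ ⋃₀ S = Set.univ ∧ #S = kc X := by
    have hne : {cc : Cardinal | ∃ S : Set (Set X),
        (∀ K ∈ S, IsCompact K) ∧ ⋃₀ S = Set.univ ∧ #S = cc}.Nonempty := by
      refine ⟨_, ⟨range (fun x : X => ({x} : Set X)), ?_, ?_, rfl⟩⟩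
      · rintro K ⟨x, rfl⟩; exact isCompact_singleton
      · ext x; simp
    obtain ⟨S, h1, h2, h3⟩ := csInf_mem hne
    exact ⟨S, h1, h2, h3⟩
  obtain ⟨S, hSc, hScov, hSmk⟩ := hkc
  have x₀ : X := Classical.arbitrary X
  set K : ↥S → Set X := fun α => ↑α ∪ {x₀} with hK
  have hKc : ∀ α, IsCompact (K α) := fun α => (hSc _ α.2).union isCompact_singleton
  have hKcov : ∀ x : X, ∃ α, x ∈ K α := by
    intro x
    have hx : x ∈ ⋃₀ S := hScov ▸ mem_univ x
    obtain ⟨tt, htS, hxt⟩ := hx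
    exact ⟨⟨tt, htS⟩, Or.inl hxt⟩
  have hKne : ∀ α, x₀ ∈ K α := fun α => Or.inr rfl
  -- boxes
  have h1 : ∀ (x : X) (y : Y), ∃ (i : ι₀) (uu : Set X) (vv : Set Y),
      IsOpen uu ∧ IsOpen vv ∧ x ∈ uu ∧ y ∈ vv ∧ uu ×ˢ vv ⊆ c i := by
    intro x y
    obtain ⟨i, hi⟩ := mem_iUnion.mp (hccov (mem_univ (x, y)))
    obtain ⟨uu, vv, hu, hv, hxu, hyv, hsub⟩ := isOpen_prod_iff.mp (hc i) x y hi
    exact ⟨i, uu, vv, hu, hv, hxu, hyv, hsub⟩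
  choose idx u v hu hv hxu hyv hbox using h1
  -- finite subcovers over compacta
  have h2 : ∀ (α : ↥S) (y : Y), ∃ tf : Finset X, K α ⊆ ⋃ x ∈ tf, u x y :=
    fun α y => (hKc α).elim_finite_subcover (fun x => u x y) (fun x => hu x y)
      (fun z _ => mem_iUnion.2 ⟨z, hxu z y⟩)
  choose t ht using h2
  set U0 : ↥S → Y → Set X := fun α y => ⋃ x ∈ t α y, u x y with hU0
  set V0 : ↥S → Y → Set Y := fun α y => ⋂ x ∈ t α y, v x y with hV0
  have hU0open : ∀ α y, IsOpen (U0 α y) :=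
    fun α y => isOpen_biUnion fun x _ => hu x y
  have hV0open : ∀ α y, IsOpen (V0 α y) :=
    fun α y => isOpen_biInter_finset fun x _ => hv x y
  have hyV0 : ∀ α y, y ∈ V0 α y := fun α y => mem_iInter₂.mpr fun x _ => hyv x y
  -- countable Y-selection per α
  have h3 : ∀ α : ↥S, ∃ ys : ℕ → Y, ∀ yy : Y, ∃ n, yy ∈ V0 α (ys n) := by
    intro α
    obtain ⟨r, hrc, hrcov⟩ := hY.isLindelof_univ.elim_countable_subcover (fun y => V0 α y)
      (fun y => hV0open α y) (fun y _ => mem_iUnion.2 ⟨y, hyV0 α y⟩)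
    have hrne : r.Nonempty := by
      rcases hYn with ⟨y⟩
      rcases r.eq_empty_or_nonempty with rfl | h
      · simpa using hrcov (mem_univ y)
      · exact h
    obtain ⟨e, he⟩ := hrc.exists_eq_range hrne
    refine ⟨e, fun yy => ?_⟩
    have := hrcov (mem_univ yy)
    rw [he] at this
    obtain ⟨y', ⟨n, rfl⟩, hy⟩ := mem_iUnion₂.mp this
    exact ⟨n, hy⟩
  choose ys hys using h3
  -- the indexed family
  set U1 : ↥S × ℕ × Bool → Set X := fun i => U0 i.1 (ys i.1 i.2.1) with hU1
  set V1 : ↥S × ℕ × Bool → Set Y := fun i => V0 i.1 (ys i.1 i.2.1) with hV1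
  set G1 : ↥S × ℕ × Bool → Finset ι₀ :=
    fun i => (t i.1 (ys i.1 i.2.1)).image (fun x => idx x (ys i.1 i.2.1)) with hG1def
  have hU1open : ∀ i, IsOpen (U1 i) := fun i => hU0open _ _
  have hV1open : ∀ i, IsOpen (V1 i) := fun i => hV0open _ _
  have hKU1 : ∀ i : ↥S × ℕ × Bool, K i.1 ⊆ U1 i := fun i => ht _ _
  have hG1 : ∀ i : ↥S × ℕ × Bool, U1 i ×ˢ V1 i ⊆ ⋃ i' ∈ G1 i, c i' := by
    rintro i ⟨a, b⟩ ⟨ha, hb⟩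
    obtain ⟨x, hxt, hax⟩ := mem_iUnion₂.mp ha
    have hbv : b ∈ v x (ys i.1 i.2.1) := mem_iInter₂.mp hb x hxt
    refine mem_iUnion₂.mpr ⟨idx x (ys i.1 i.2.1), Finset.mem_image_of_mem _ hxt, ?_⟩
    exact hbox x (ys i.1 i.2.1) ⟨hax, hbv⟩
  -- punctured family with countable fibers
  have hUU : ∃ UU : ↥S × ℕ × Bool → Set X, (∀ i, IsOpen (UU i)) ∧ (∀ i, UU i ⊆ U1 i) ∧
      (∀ (α : ↥S) (n : ℕ) (x : X), x ∈ K α → ∃ b, x ∈ UU (α, n, b)) ∧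
      (∀ A : Set X, {i : ↥S × ℕ × Bool | UU i = A}.Countable) := by
    rcases le_or_gt (kc X) ℵ₀ with hκ | hκ
    · refine ⟨U1, hU1open, fun i => subset_rfl, fun α n x hx => ⟨true, hKU1 (α, n, true) hx⟩,
        fun A => ?_⟩
      haveI : Countable ↥S := mk_le_aleph0_iff.mp (le_of_eq_of_le hSmk hκ)
      exact Set.to_countable _
    · have hι2 : #(↥S × ℕ × Bool) ≤ kc X := by
        rw [mk_prod, Cardinal.lift_uzero]
        have e2 : Cardinal.lift.{u} #(ℕ × Bool) ≤ ℵ₀ := by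
          rw [← Cardinal.lift_aleph0.{u, 0}]
          exact Cardinal.lift_le.mpr (Cardinal.mk_le_aleph0)
        calc #↥S * Cardinal.lift.{u} #(ℕ × Bool) ≤ kc X * ℵ₀ :=
              mul_le_mul' (le_of_eq hSmk) e2
          _ = kc X := by
              rw [Cardinal.mul_eq_max hκ.le le_rfl]
              exact max_eq_left hκ.le
      have hU1card : ∀ i, kc X ≤ #(U1 i) :=
        fun i => hcard _ (hU1open i) ⟨x₀, hKU1 i (hKne i.1)⟩
      obtain ⟨pt, hpt1, hpt2⟩ := exists_puncture (kc X) hι2 U1 hU1card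
      refine ⟨fun i => U1 i \ {pt i}, fun i => (hU1open i).sdiff isClosed_singleton,
        fun i => diff_subset, ?_, ?_⟩
      · intro α n x hx
        have hne2 : pt (α, n, false) ≠ pt (α, n, true) := by
          intro h
          have hEq : U1 (α, n, false) \ {pt (α, n, false)} =
              U1 (α, n, true) \ {pt (α, n, true)} := by rw [h]
          exact Bool.false_ne_true (congrArg (fun p => p.2.2) (hpt2 hEq))
        by_cases hxf : x = pt (α, n, false)
        · refine ⟨true, hKU1 (α, n, true) hx, ?_⟩
          simp only [mem_singleton_iff]
          rw [hxf]
          exact hne2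
        · exact ⟨false, hKU1 (α, n, false) hx, hxf⟩
      · intro A
        apply Set.Subsingleton.countable
        intro i hi j hj
        exact hpt2 (hi.trans hj.symm)
  obtain ⟨UU, hUUopen, hUUsub, hUUcov, hUUfib⟩ := hUU
  -- the Lindelöf collection of covers
  set 𝒰 : Y → Set (Set X) := fun y => {A | ∃ i, UU i = A ∧ y ∈ V1 i} with h𝒰
  set 𝒴 : Set (Set (Set X)) := range 𝒰 with h𝒴
  have hcovs : ∀ W ∈ 𝒴, IsOpenCover W := by
    rintro W ⟨y, rfl⟩
    constructor
    · rintro A ⟨i, rfl, -⟩; exact hUUopen i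
    · ext x
      simp only [mem_univ, iff_true, mem_sUnion]
      obtain ⟨α, hα⟩ := hKcov x
      obtain ⟨n, hn⟩ := hys α y
      obtain ⟨b, hb⟩ := hUUcov α n x hα
      exact ⟨UU (α, n, b), ⟨(α, n, b), rfl, hn⟩, hb⟩
  have hlin : IsLindelofCollection 𝒴 := by
    intro f hf
    have h4 : ∀ y : Y, ∃ Vy : Set Y, IsOpen Vy ∧ y ∈ Vy ∧
        ∀ A ∈ f (𝒰 y), ∀ y' ∈ Vy, A ∈ 𝒰 y' := by
      intro y
      have hsel : ∀ A ∈ f (𝒰 y), ∃ i, UU i = A ∧ y ∈ V1 i :=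
        fun A hA => hf (𝒰 y) ⟨y, rfl⟩ hA
      choose iw hiw1 hiw2 using hsel
      refine ⟨⋂ (A : {A // A ∈ f (𝒰 y)}), V1 (iw A.1 A.2), ?_, ?_, ?_⟩
      · exact isOpen_iInter_of_finite fun A => hV1open _
      · exact mem_iInter.mpr fun A => hiw2 A.1 A.2
      · intro A hA y' hy'
        exact ⟨iw A hA, hiw1 A hA, (mem_iInter.mp hy') ⟨A, hA⟩⟩
    choose Vy hVyo hVym hVyp using h4
    obtain ⟨r, hrc, hrcov⟩ := hY.isLindelof_univ.elim_countable_subcover Vy hVyo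
      (fun y _ => mem_iUnion.2 ⟨y, hVym y⟩)
    have hrne : r.Nonempty := by
      rcases hYn with ⟨y⟩
      rcases r.eq_empty_or_nonempty with rfl | h
      · simpa using hrcov (mem_univ y)
      · exact h
    obtain ⟨e, he⟩ := hrc.exists_eq_range hrne
    refine ⟨fun n => 𝒰 (e n), fun n => ⟨e n, rfl⟩, ?_⟩
    rintro W ⟨y, rfl⟩
    have hy : y ∈ ⋃ y' ∈ r, Vy y' := hrcov (mem_univ y)
    rw [he] at hy
    obtain ⟨y', ⟨n, rfl⟩, hyn⟩ := mem_iUnion₂.mp hy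
    exact ⟨n, fun A hA => hVyp (e n) A hA y hyn⟩
  obtain ⟨A, hAopen, hA⟩ := hpl 𝒴 hcovs hlin
  refine ⟨⋃ (j : ℕ), ⋃ i ∈ {i | UU i = A j}, (↑(G1 i) : Set ι₀), ?_, ?_⟩
  · exact countable_iUnion fun j => (hUUfib (A j)).biUnion fun i _ => (G1 i).countable_toSet
  · rintro ⟨x, y⟩ -
    obtain ⟨j, hxj, hAj⟩ := hA x (𝒰 y) ⟨y, rfl⟩
    obtain ⟨i, hiA, hyV⟩ := hAj
    have hxy : (x, y) ∈ U1 i ×ˢ V1 i := ⟨hUUsub i (hiA ▸ hxj), hyV⟩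
    obtain ⟨i', hi'G, hi'c⟩ := mem_iUnion₂.mp (hG1 i hxy)
    refine mem_iUnion₂.mpr ⟨i', ?_, hi'c⟩
    exact mem_iUnion.mpr ⟨j, mem_iUnion₂.mpr ⟨i, hiA, hi'G⟩⟩


theorem stmt10 {X : Type u} [TopologicalSpace X] [T1Space X] [LindelofSpace X]
    (hcard : ∀ U : Set X, IsOpen U → U.Nonempty → kc X ≤ Cardinal.mk U) :
    ProductivelyLindelof X ↔ HasPL X := by
  exact ⟨fun h => prod_to_pL h, fun h => pL_to_prod hcard h⟩
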